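/- Let (Λ,d) be a generalised Bratteli diagram of infinite depth, and let {s_λ : λ ∈ Λ} be a Cuntz–Krieger Λ-family in a C*-algebra A. For each N ∈ ℕ, let Λ_N := {λ ∈ Λ : r(λ), s(λ) ∈ ⋃_{n=0}^N V_n} and let B_N be the C*-subalgebra of A generated by {s_ρ : ρ ∈ Λ_N}. Let B be the C*-subalgebra of A generated by {s_λ : λ ∈ Λ}. Then B equals the closure of ⋃_{N=1}^∞ B_N; the projection P := ∑_{v ∈ V₀} s_v is full in B and in each B_N (the closed two-sided ideal it generates is the whole algebra); and PBP equals the closure of ⋃_{N=1}^∞ P B_N P. -/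

import Mathlib

open scoped ENNReal

/-- A rank-2 graph (`2`-graph): a countable category whose morphisms (paths) carry a
degree functor `d : Path → ℕ × ℕ` satisfying the unique factorisation property.
Vertices are identified with the paths of degree `(0,0)`; composition is a total
function whose behaviour is constrained only on composable pairs (`s p = r q`). -/
structure TwoGraph where
  Path : Type
  countable : Countable Path
  d : Path → ℕ × ℕ
  r : Path → Path
  s : Path → Path
  comp : Path → Path → Path
  d_r : ∀ p, d (r p) = 0
  d_s : ∀ p, d (s p) = 0
  r_vertex : ∀ p, d p = 0 → r p = p
  s_vertex : ∀ p, d p = 0 → s p = p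
  id_comp : ∀ p, comp (r p) p = p
  comp_id : ∀ p, comp p (s p) = p
  r_comp : ∀ p q, s p = r q → r (comp p q) = r p
  s_comp : ∀ p q, s p = r q → s (comp p q) = s q
  d_comp : ∀ p q, s p = r q → d (comp p q) = d p + d q
  comp_assoc : ∀ p q t, s p = r q → s q = r t → comp (comp p q) t = comp p (comp q t)
  factor : ∀ (lam : Path) (m n : ℕ × ℕ), d lam = m + n →
    ∃! mn : Path × Path,
      d mn.1 = m ∧ d mn.2 = n ∧ s mn.1 = r mn.2 ∧ comp mn.1 mn.2 = lam

namespace TwoGraph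

variable (G : TwoGraph)

/-- Vertices are the paths of degree `0`. -/
def IsVertex (p : G.Path) : Prop := G.d p = 0

/-- A blue path: one whose degree lies in `ℕ e₁`. -/
def IsBlue (p : G.Path) : Prop := (G.d p).2 = 0

/-- A red path: one whose degree lies in `ℕ e₂`. -/
def IsRed (p : G.Path) : Prop := (G.d p).1 = 0

/-- A blue edge: a path of degree `e₁ = (1,0)`. -/
def IsBlueEdge (p : G.Path) : Prop := G.d p = (1, 0)

/-- A red edge: a path of degree `e₂ = (0,1)`. -/
def IsRedEdge (p : G.Path) : Prop := G.d p = (0, 1)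

/-- `Λ` is row-finite: `vΛⁿ` is finite for every vertex `v` and degree `n`. -/
def RowFinite : Prop :=
  ∀ (v : G.Path) (n : ℕ × ℕ), G.IsVertex v →
    {p : G.Path | G.r p = v ∧ G.d p = n}.Finite

/-- `Λ` is a finite `2`-graph: `Λⁿ` is finite for every degree `n`. -/
def FinitePaths : Prop := ∀ n : ℕ × ℕ, {p : G.Path | G.d p = n}.Finite

/-- `μ` is an initial segment of `lam`, i.e. `lam = μ ν` for some `ν`. -/
def InitSeg (μ lam : G.Path) : Prop := ∃ ν, G.s μ = G.r ν ∧ G.comp μ ν = lam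

/-- `μ` is a final segment of `lam`, i.e. `lam = ν μ` for some `ν`. -/
def FinalSeg (μ lam : G.Path) : Prop := ∃ ν, G.s ν = G.r μ ∧ G.comp ν μ = lam

/-- The vertex `v` lies on the path `lam`, i.e. `v = lam(n)` for some `0 ≤ n ≤ d lam`. -/
def OnPath (lam v : G.Path) : Prop :=
  G.IsVertex v ∧ ∃ μ, G.InitSeg μ lam ∧ G.s μ = v

/-- A cycle: `d lam ≠ 0`, `r lam = s lam`, and `lam(n) ≠ s lam` for `0 < n < d lam`. -/
def IsCycle (lam : G.Path) : Prop :=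
  G.d lam ≠ 0 ∧ G.r lam = G.s lam ∧
    ∀ μ, G.InitSeg μ lam → G.d μ ≠ 0 → G.d μ ≠ G.d lam → G.s μ ≠ G.s lam

/-- `lam` has no entrance: for `n ≤ d lam`, every path of degree `n` with range `r lam`
is the initial segment `lam(0,n)`. -/
def HasNoEntrance (lam : G.Path) : Prop :=
  ∀ n : ℕ × ℕ, n ≤ G.d lam → ∀ μ, G.d μ = n → G.r μ = G.r lam → G.InitSeg μ lam

/-- `lam` has no exit: for `n ≤ d lam`, every path of degree `n` with source `s lam`
is the final segment `lam(d lam - n, d lam)`. -/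
def HasNoExit (lam : G.Path) : Prop :=
  ∀ n : ℕ × ℕ, n ≤ G.d lam → ∀ μ, G.d μ = n → G.s μ = G.s lam → G.FinalSeg μ lam

/-- An isolated cycle: no entrances and no exits. -/
def IsIsolated (lam : G.Path) : Prop := G.HasNoEntrance lam ∧ G.HasNoExit lam

/-- An isolated cycle in the red graph. -/
def IsIsolatedRedCycle (lam : G.Path) : Prop :=
  G.IsRed lam ∧ G.IsCycle lam ∧ G.IsIsolated lam

/-- Condition (3.1): `Λ` is row-finite, the blue graph contains no cycles, and each
vertex is the range of an isolated cycle in the red graph. -/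
def Cond31 : Prop :=
  G.RowFinite ∧ (∀ p, G.IsBlue p → ¬ G.IsCycle p) ∧
    ∀ v, G.IsVertex v → ∃ lam, G.IsIsolatedRedCycle lam ∧ G.r lam = v

/-- A source of the blue graph: a vertex receiving no blue edges. -/
def IsBlueSource (v : G.Path) : Prop :=
  G.IsVertex v ∧ ∀ e, G.IsBlueEdge e → G.r e ≠ v

/-- A sink of the blue graph: a vertex emitting no blue edges. -/
def IsBlueSink (v : G.Path) : Prop :=
  G.IsVertex v ∧ ∀ e, G.IsBlueEdge e → G.s e ≠ v

/-- `Λ^{≤ n}`. -/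
def LeSet (n : ℕ × ℕ) : Set G.Path :=
  {lam | G.d lam ≤ n ∧
    ∀ μ, G.s lam = G.r μ → G.comp lam μ ≠ lam → ¬ G.d (G.comp lam μ) ≤ n}

/-- `IsSwap ρ τ τ' ρ'` says that `(τ', ρ') = 𝓕(ρ, τ)` is the factorisation of `ρτ`
with the degrees in the reversed order: `τ'ρ' = ρτ`, `d τ' = d τ` and `d ρ' = d ρ`. -/
def IsSwap (ρ τ τ' ρ' : G.Path) : Prop :=
  G.s ρ = G.r τ ∧ G.s τ' = G.r ρ' ∧ G.d τ' = G.d τ ∧ G.d ρ' = G.d ρ ∧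
    G.comp τ' ρ' = G.comp ρ τ

/-- The edge `e` occurs at position `n` in the red path `μ`. -/
def OccAt (μ e : G.Path) (n : ℕ) : Prop :=
  ∃ ρ ξ, G.d ρ = (0, n) ∧ G.s ρ = G.r e ∧ G.s e = G.r ξ ∧
    G.comp ρ (G.comp e ξ) = μ

/-- `⟨μ, e⟩`: the number of occurrences of the red edge `e` in the red path `μ`. -/
noncomputable def occCount (μ e : G.Path) : ℕ :=
  Nat.card {n : ℕ // G.OccAt μ e n}

/-- Membership in `Y = (blue Λ)S`: a blue path whose source is a source of the
blue graph. -/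
def InY (α : G.Path) : Prop := G.IsBlue α ∧ G.IsBlueSource (G.s α)

/-- One step of the factorisation permutation `𝓕` of the blue paths of a GBD:
`α' = 𝓕(α)` iff `f α = α' f'` for (the) red edges `f, f'` with `s f = r α`. -/
def FStep (α α' : G.Path) : Prop :=
  G.IsBlue α ∧ G.IsBlue α' ∧
    ∃ f f', G.IsRedEdge f ∧ G.IsRedEdge f' ∧ G.s f = G.r α ∧ G.s α' = G.r f' ∧
      G.comp f α = G.comp α' f'

end TwoGraph

/-- `k`-fold iteration of the factorisation permutation, as a relation. -/
def TwoGraph.FIter (G : TwoGraph) : ℕ → G.Path → G.Path → Prop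
  | 0, α, α' => α = α'
  | k + 1, α, α' => ∃ β, G.FStep α β ∧ TwoGraph.FIter G k β α'

namespace TwoGraph

variable (G : TwoGraph)

/-- `o(α) = k`: `k` is the order of the blue path `α` under the factorisation
permutation `𝓕`. -/
def HasOrder (α : G.Path) (k : ℕ) : Prop :=
  0 < k ∧ G.FIter k α α ∧ ∀ m, 0 < m → m < k → ¬ G.FIter m α α

end TwoGraph

/-- `IsChainComp [e₁, …, eₙ] β` says `β = e₁ e₂ ⋯ eₙ`. -/
def TwoGraph.IsChainComp (G : TwoGraph) : List G.Path → G.Path → Prop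
  | [], β => G.IsVertex β
  | e :: l, β => ∃ γ, TwoGraph.IsChainComp G l γ ∧ G.s e = G.r γ ∧ β = G.comp e γ

/-- `cyclePow lam m = lam^m`, the `m`-fold concatenation of the cycle `lam`,
with `lam^0 = s lam`. -/
def TwoGraph.cyclePow (G : TwoGraph) (lam : G.Path) : ℕ → G.Path
  | 0 => G.s lam
  | m + 1 => G.comp lam (TwoGraph.cyclePow G lam m)

namespace TwoGraph

variable (G : TwoGraph)

/-! ### Relative (sub-2-graph) versions of the basic notions -/

/-- `μ` is an initial segment of `lam` within `P`. -/
def InitSegIn (P : Set G.Path) (μ lam : G.Path) : Prop :=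
  ∃ ν ∈ P, G.s μ = G.r ν ∧ G.comp μ ν = lam

/-- `μ` is a final segment of `lam` within `P`. -/
def FinalSegIn (P : Set G.Path) (μ lam : G.Path) : Prop :=
  ∃ ν ∈ P, G.s ν = G.r μ ∧ G.comp ν μ = lam

/-- A cycle of the sub-2-graph with path-set `P`. -/
def IsCycleIn (P : Set G.Path) (lam : G.Path) : Prop :=
  lam ∈ P ∧ G.d lam ≠ 0 ∧ G.r lam = G.s lam ∧
    ∀ μ ∈ P, G.InitSegIn P μ lam → G.d μ ≠ 0 → G.d μ ≠ G.d lam → G.s μ ≠ G.s lam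

def HasNoEntranceIn (P : Set G.Path) (lam : G.Path) : Prop :=
  ∀ n : ℕ × ℕ, n ≤ G.d lam → ∀ μ ∈ P, G.d μ = n → G.r μ = G.r lam → G.InitSegIn P μ lam

def HasNoExitIn (P : Set G.Path) (lam : G.Path) : Prop :=
  ∀ n : ℕ × ℕ, n ≤ G.d lam → ∀ μ ∈ P, G.d μ = n → G.s μ = G.s lam → G.FinalSegIn P μ lam

/-- An isolated cycle of the red graph of the sub-2-graph with path-set `P`. -/
def IsIsolatedRedCycleIn (P : Set G.Path) (lam : G.Path) : Prop :=
  lam ∈ P ∧ G.IsRed lam ∧ G.IsCycleIn P lam ∧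
    G.HasNoEntranceIn P lam ∧ G.HasNoExitIn P lam

def RowFiniteIn (P : Set G.Path) : Prop :=
  ∀ (v : G.Path) (n : ℕ × ℕ), G.IsVertex v →
    {p : G.Path | p ∈ P ∧ G.r p = v ∧ G.d p = n}.Finite

/-- A source of the blue graph of the sub-2-graph with path-set `P`. -/
def IsBlueSourceIn (P : Set G.Path) (v : G.Path) : Prop :=
  v ∈ P ∧ G.IsVertex v ∧ ∀ e ∈ P, G.IsBlueEdge e → G.r e ≠ v

/-- Condition (3.1) for the sub-2-graph with path-set `P`. -/
def Cond31In (P : Set G.Path) : Prop :=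
  G.RowFiniteIn P ∧ (∀ p ∈ P, G.IsBlue p → ¬ G.IsCycleIn P p) ∧
    ∀ v ∈ P, G.IsVertex v → ∃ lam, G.IsIsolatedRedCycleIn P lam ∧ G.r lam = v

/-- `Λ_j = {λ ∈ Λ : s(λ) Λ W ≠ ∅}`: the paths admitting a path from their source
into the vertex set `W`. -/
def subGraphTo (W : Set G.Path) : Set G.Path :=
  {p | ∃ μ, G.r μ = G.s p ∧ G.s μ ∈ W}

/-- `Λ` has large-permutation factorisations. -/
def HasLPF : Prop :=
  ∀ v, G.IsVertex v → ∀ l : ℕ, 0 < l → ∃ N : ℕ,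
    ∀ α, G.IsBlue α → G.r α = v → G.d α = (N, 0) →
      ∀ k, G.HasOrder α k → l < k

end TwoGraph

/-- A generalised Bratteli diagram of depth `N ∈ ℕ ∪ {∞}` with vertex decomposition
`Λ⁰ = ⊔ₙ V n`. -/
structure IsGBD (G : TwoGraph) (N : ℕ∞) (V : ℕ → Set G.Path) : Prop where
  rowFinite : G.RowFinite
  level_nonempty : ∀ n : ℕ, (n : ℕ∞) ≤ N → (V n).Nonempty
  level_finite : ∀ n : ℕ, (V n).Finite
  level_empty : ∀ n : ℕ, ¬ ((n : ℕ∞) ≤ N) → V n = ∅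
  level_vertex : ∀ n, V n ⊆ {v | G.IsVertex v}
  cover : ∀ v, G.IsVertex v → ∃ n, v ∈ V n
  level_disjoint : ∀ m n, m ≠ n → Disjoint (V m) (V n)
  blue_level : ∀ e, G.IsBlueEdge e → ∃ n, G.r e ∈ V n ∧ G.s e ∈ V (n + 1)
  sinks_bottom : ∀ v, G.IsBlueSink v → v ∈ V 0
  sources_top : ∀ v, G.IsBlueSource v → ∃ n : ℕ, (n : ℕ∞) = N ∧ v ∈ V n
  red_cycle : ∀ v, G.IsVertex v → ∃ lam, G.IsIsolatedRedCycle lam ∧ G.r lam = v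
  red_level : ∀ f, G.IsRedEdge f → ∃ n, G.r f ∈ V n ∧ G.s f ∈ V n

/-- The sub-2-graph `Λ_N` of paths joining vertices in the first `N` levels. -/
def levelPaths (G : TwoGraph) (V : ℕ → Set G.Path) (N : ℕ) : Set G.Path :=
  {p | (∃ n ≤ N, G.r p ∈ V n) ∧ (∃ n ≤ N, G.s p ∈ V n)}

/-- An infinite path in a 2-graph: a degree-preserving functor `Ω₂ → Λ`, recorded by
its segments `x(m,n)` for `m ≤ n` in `ℕ × ℕ`. -/
structure InfPath (G : TwoGraph) where
  seg : ℕ × ℕ → ℕ × ℕ → G.Path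
  deg : ∀ m n : ℕ × ℕ, m ≤ n → G.d (seg m n) = n - m
  range_seg : ∀ m n : ℕ × ℕ, m ≤ n → G.r (seg m n) = seg m m
  source_seg : ∀ m n : ℕ × ℕ, m ≤ n → G.s (seg m n) = seg n n
  comp_seg : ∀ m n p : ℕ × ℕ, m ≤ n → n ≤ p → G.comp (seg m n) (seg n p) = seg m p

/-- A Cuntz–Krieger `Λ`-family in a C*-algebra `A`. -/
structure CKFamily (G : TwoGraph) (A : Type*) [CStarAlgebra A] where
  S : G.Path → A
  ck1_sa : ∀ v, G.IsVertex v → star (S v) = S v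
  ck1_idem : ∀ v, G.IsVertex v → S v * S v = S v
  ck1_orth : ∀ v w, G.IsVertex v → G.IsVertex w → v ≠ w → S v * S w = 0
  ck2 : ∀ p q, G.s p = G.r q → S p * S q = S (G.comp p q)
  ck3 : ∀ p, star (S p) * S p = S (G.s p)
  ck4 : ∀ (v : G.Path) (n : ℕ × ℕ), G.IsVertex v →
    S v = ∑ᶠ lam ∈ {lam : G.Path | lam ∈ G.LeSet n ∧ G.r lam = v},
      S lam * star (S lam)

section CStar

variable {A : Type*} [CStarAlgebra A]

/-- The C*-subalgebra (as a subset) of `A` generated by a set `SS`. -/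
def generatedCStar (SS : Set A) : Set A :=
  closure (NonUnitalStarAlgebra.adjoin ℂ SS : Set A)

/-- `P` is full in the C*-algebra `Bset ⊆ A`: every closed two-sided ideal of `Bset`
containing `P` is all of `Bset`. -/
def FullIn (Bset : Set A) (P : A) : Prop :=
  ∀ I : Set A, I ⊆ Bset → IsClosed I →
    (∀ x ∈ I, ∀ y ∈ I, x + y ∈ I) → (∀ (c : ℂ), ∀ x ∈ I, c • x ∈ I) →
    (∀ a ∈ Bset, ∀ x ∈ I, a * x ∈ I ∧ x * a ∈ I) →
    P ∈ I → Bset ⊆ I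

/-- The sum `∑_{v ∈ Λ⁰} s_v`, which is the unit of `C*(Λ)` for finite `Λ`. -/
noncomputable def ckUnit (G : TwoGraph) (F : CKFamily G A) : A :=
  ∑ᶠ v ∈ {v : G.Path | G.IsVertex v}, F.S v

/-- The canonical unitary `U = ∑_{α ∈ Y} s_α s_{λ(α)} s_α*`. -/
noncomputable def ckU (G : TwoGraph) (F : CKFamily G A) (lam : G.Path → G.Path) : A :=
  ∑ᶠ α ∈ {α : G.Path | G.InY α}, F.S α * F.S (lam α) * star (F.S α)

/-- The gauge action: for every `z ∈ 𝕋²` there is a *-automorphism `γ_z` of the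
C*-subalgebra generated by the family with `γ_z(s_λ) = z^{d(λ)} s_λ`. -/
def GaugeInvariant (G : TwoGraph) (F : CKFamily G A) : Prop :=
  ∀ z₁ z₂ : ℂ, ‖z₁‖ = 1 → ‖z₂‖ = 1 → ∃ γ : A → A,
    Set.BijOn γ (generatedCStar (Set.range F.S)) (generatedCStar (Set.range F.S)) ∧
    (∀ x ∈ generatedCStar (Set.range F.S), ∀ y ∈ generatedCStar (Set.range F.S),
      γ (x + y) = γ x + γ y ∧ γ (x * y) = γ x * γ y) ∧
    (∀ x ∈ generatedCStar (Set.range F.S), γ (star x) = star (γ x)) ∧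
    (∀ (c : ℂ), ∀ x ∈ generatedCStar (Set.range F.S), γ (c • x) = c • γ x) ∧
    (∀ p : G.Path, γ (F.S p) = (z₁ ^ (G.d p).1 * z₂ ^ (G.d p).2) • F.S p)

end CStar

section Aux


variable {A : Type*} [CStarAlgebra A]

/-- The generated C*-algebra as a `NonUnitalStarSubalgebra`. -/
noncomputable def genSub (SS : Set A) : NonUnitalStarSubalgebra ℂ A :=
  (NonUnitalStarAlgebra.adjoin ℂ SS).topologicalClosure

lemma generatedCStar_eq_genSub (SS : Set A) :
    generatedCStar SS = (genSub SS : Set A) := rfl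

lemma subset_generatedCStar (SS : Set A) : SS ⊆ generatedCStar SS :=
  (NonUnitalStarAlgebra.subset_adjoin ℂ SS).trans subset_closure

lemma isClosed_generatedCStar (SS : Set A) : IsClosed (generatedCStar SS) :=
  isClosed_closure

lemma generatedCStar_mono {SS TT : Set A} (h : SS ⊆ TT) :
    generatedCStar SS ⊆ generatedCStar TT :=
  closure_mono (NonUnitalStarAlgebra.adjoin_le (h.trans (NonUnitalStarAlgebra.subset_adjoin ℂ TT)))

lemma star_mem_generatedCStar {SS : Set A} {x : A} (hx : x ∈ generatedCStar SS) :
    star x ∈ generatedCStar SS := by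
  rw [generatedCStar_eq_genSub] at hx ⊢
  exact star_mem hx

lemma mul_mem_generatedCStar {SS : Set A} {x y : A} (hx : x ∈ generatedCStar SS)
    (hy : y ∈ generatedCStar SS) : x * y ∈ generatedCStar SS := by
  rw [generatedCStar_eq_genSub] at hx hy ⊢
  exact mul_mem hx hy

end Aux

section GBD

variable {A : Type*} [CStarAlgebra A] {G : TwoGraph} {V : ℕ → Set G.Path}

lemma IsGBD.vertex_mem_level_unique (hGBD : IsGBD G ⊤ V) {v : G.Path} {m n : ℕ}
    (hm : v ∈ V m) (hn : v ∈ V n) : m = n := by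
  by_contra h
  exact Set.disjoint_left.mp (hGBD.level_disjoint m n h) hm hn

/-- Every vertex in `V n` admits a path down to `V 0`. -/
lemma IsGBD.path_to_zero (hGBD : IsGBD G ⊤ V) :
    ∀ n (v : G.Path), v ∈ V n → ∃ lam, G.r lam ∈ V 0 ∧ G.s lam = v := by
  intro n
  induction n with
  | zero =>
    intro v hv
    have hvert : G.IsVertex v := hGBD.level_vertex 0 hv
    exact ⟨v, by rwa [G.r_vertex v hvert], G.s_vertex v hvert⟩
  | succ n ih =>
    intro v hv
    have hvert : G.IsVertex v := hGBD.level_vertex (n + 1) hv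
    have hnot : ¬ G.IsBlueSink v := by
      intro hsink
      have h0 : v ∈ V 0 := hGBD.sinks_bottom v hsink
      exact Nat.succ_ne_zero n (hGBD.vertex_mem_level_unique hv h0)
    rw [TwoGraph.IsBlueSink] at hnot
    push_neg at hnot
    obtain ⟨e, he, hse⟩ := hnot hvert
    obtain ⟨m, hrm, hsm⟩ := hGBD.blue_level e he
    have hmn : m + 1 = n + 1 := hGBD.vertex_mem_level_unique (hse ▸ hsm) hv
    obtain ⟨μ, hrμ, hsμ⟩ := ih (G.r e) (by rwa [Nat.succ_injective hmn] at hrm)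
    refine ⟨G.comp μ e, ?_, ?_⟩
    · rwa [G.r_comp μ e hsμ]
    · rw [G.s_comp μ e hsμ, hse]

end GBD

section CK

variable {A : Type*} [CStarAlgebra A] {G : TwoGraph} {V : ℕ → Set G.Path}

lemma CKFamily.rS_mul (F : CKFamily G A) (lam : G.Path) :
    F.S (G.r lam) * F.S lam = F.S lam := by
  have h1 : G.s (G.r lam) = G.r lam := G.s_vertex _ (G.d_r lam)
  rw [F.ck2 (G.r lam) lam h1, G.id_comp]

lemma CKFamily.vertex_mul_eq_zero (F : CKFamily G A) {v : G.Path} (hv : G.IsVertex v)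
    (lam : G.Path) (hne : v ≠ G.r lam) : F.S v * F.S lam = 0 := by
  rw [← F.rS_mul lam, ← mul_assoc, F.ck1_orth v (G.r lam) hv (G.d_r lam) hne, zero_mul]

lemma IsGBD.sum0_mul (hGBD : IsGBD G ⊤ V) (F : CKFamily G A) {lam : G.Path}
    (h0 : G.r lam ∈ V 0) :
    (∑ v ∈ (hGBD.level_finite 0).toFinset, F.S v) * F.S lam = F.S lam := by
  rw [Finset.sum_mul, Finset.sum_eq_single (G.r lam)]
  · exact F.rS_mul lam
  · intro v hv hne
    exact F.vertex_mul_eq_zero (hGBD.level_vertex 0 ((hGBD.level_finite 0).mem_toFinset.mp hv)) lam hne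
  · intro h
    exact absurd ((hGBD.level_finite 0).mem_toFinset.mpr h0) h

lemma IsGBD.P_mul_S (hGBD : IsGBD G ⊤ V) (F : CKFamily G A) {lam : G.Path}
    (h0 : G.r lam ∈ V 0) :
    (∑ᶠ v ∈ V 0, F.S v) * F.S lam = F.S lam := by
  rw [← (hGBD.level_finite 0).coe_toFinset, finsum_mem_coe_finset]
  exact hGBD.sum0_mul F h0

lemma IsGBD.P_sq (hGBD : IsGBD G ⊤ V) (F : CKFamily G A) :
    (∑ᶠ v ∈ V 0, F.S v) * (∑ᶠ v ∈ V 0, F.S v) = ∑ᶠ v ∈ V 0, F.S v := by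
  rw [← (hGBD.level_finite 0).coe_toFinset, finsum_mem_coe_finset, Finset.mul_sum]
  refine Finset.sum_congr rfl fun w hw => ?_
  have hw0 : w ∈ V 0 := (hGBD.level_finite 0).mem_toFinset.mp hw
  have hvert : G.IsVertex w := hGBD.level_vertex 0 hw0
  exact hGBD.sum0_mul F (by rwa [G.r_vertex w hvert])

lemma IsGBD.fullIn_generated (hGBD : IsGBD G ⊤ V) (F : CKFamily G A) (SS : Set A)
    (hconn : ∀ g ∈ SS, ∃ ρ lam, g = F.S ρ ∧ G.r lam ∈ V 0 ∧ G.s lam = G.s ρ ∧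
      F.S lam ∈ SS) :
    FullIn (generatedCStar SS) (∑ᶠ v ∈ V 0, F.S v) := by
  intro I hIsub hIclosed hadd hsmul hmul hP
  have hgen : ∀ g ∈ SS, g ∈ I ∧ star g ∈ I := by
    intro g hg
    obtain ⟨ρ, lam, rfl, h0, hslam, hlamSS⟩ := hconn g hg
    have hlamB : F.S lam ∈ generatedCStar SS := subset_generatedCStar SS hlamSS
    have hρB : F.S ρ ∈ generatedCStar SS := subset_generatedCStar SS hg
    have h1 : (∑ᶠ v ∈ V 0, F.S v) * F.S lam ∈ I := (hmul (F.S lam) hlamB _ hP).2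
    rw [hGBD.P_mul_S F h0] at h1
    have h2 : star (F.S lam) * F.S lam ∈ I :=
      (hmul (star (F.S lam)) (star_mem_generatedCStar hlamB) _ h1).1
    rw [F.ck3, hslam] at h2
    have hsρ : G.s ρ = G.r (G.s ρ) := (G.r_vertex _ (G.d_s ρ)).symm
    have hcomp : F.S ρ * F.S (G.s ρ) = F.S ρ := by
      rw [F.ck2 ρ (G.s ρ) hsρ, G.comp_id]
    constructor
    · have h3 := (hmul (F.S ρ) hρB _ h2).1
      rwa [hcomp] at h3
    · have h3 := (hmul (star (F.S ρ)) (star_mem_generatedCStar hρB) _ h2).2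
      have heq : F.S (G.s ρ) * star (F.S ρ) = star (F.S ρ) := by
        rw [← F.ck1_sa (G.s ρ) (G.d_s ρ), ← star_mul, hcomp]
      rwa [heq] at h3
  have hzero : (0 : A) ∈ I := by
    have h := hsmul 0 _ hP
    rwa [zero_smul] at h
  have hstep : ∀ x ∈ NonUnitalStarAlgebra.adjoin ℂ SS, x ∈ I ∧ star x ∈ I := by
    intro x hx
    induction hx using NonUnitalStarAlgebra.adjoin_induction with
    | mem x hx => exact hgen x hx
    | add x y hx hy ihx ihy =>
        exact ⟨hadd _ ihx.1 _ ihy.1, by rw [star_add]; exact hadd _ ihx.2 _ ihy.2⟩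
    | zero => exact ⟨hzero, by rwa [star_zero]⟩
    | mul x y hx hy ihx ihy =>
        refine ⟨(hmul x (hIsub ihx.1) y ihy.1).1, ?_⟩
        rw [star_mul]
        exact (hmul (star x) (star_mem_generatedCStar (hIsub ihx.1)) (star y) ihy.2).2
    | smul c x hx ihx =>
        exact ⟨hsmul c _ ihx.1, by rw [star_smul]; exact hsmul _ _ ihx.2⟩
    | star x hx ihx => exact ⟨ihx.2, by rw [star_star]; exact ihx.1⟩
  exact closure_minimal (fun x hx => (hstep x hx).1) hIclosed

end CK

/-- For a GBD of infinite depth, the generated C*-algebra `B` is the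
closure of the union of the subalgebras `B_N` generated by `{s_ρ : ρ ∈ Λ_N}`;
`P = ∑_{v ∈ V₀} s_v` is full in `B` and in each `B_N`; and
`PBP` is the closure of `⋃_N P B_N P`. -/
theorem stmt11 {A : Type*} [CStarAlgebra A]
    (G : TwoGraph) (V : ℕ → Set G.Path) (hGBD : IsGBD G ⊤ V)
    (F : CKFamily G A) :
    (generatedCStar (Set.range F.S)
        = closure (⋃ N : ℕ, generatedCStar (F.S '' levelPaths G V N))) ∧
    FullIn (generatedCStar (Set.range F.S)) (∑ᶠ v ∈ V 0, F.S v) ∧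
    (∀ N : ℕ, FullIn (generatedCStar (F.S '' levelPaths G V N)) (∑ᶠ v ∈ V 0, F.S v)) ∧
    ((fun x => (∑ᶠ v ∈ V 0, F.S v) * x * (∑ᶠ v ∈ V 0, F.S v)) ''
          generatedCStar (Set.range F.S)
      = closure (⋃ N : ℕ,
          (fun x => (∑ᶠ v ∈ V 0, F.S v) * x * (∑ᶠ v ∈ V 0, F.S v)) ''
            generatedCStar (F.S '' levelPaths G V N))) := by
  classical
  set P : A := ∑ᶠ v ∈ V 0, F.S v with hPdef
  have hPP : P * P = P := hGBD.P_sq F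
  have hfin0 := hGBD.level_finite 0
  have hPfin : P = ∑ v ∈ hfin0.toFinset, F.S v := by
    conv_lhs => rw [hPdef, ← hfin0.coe_toFinset]
    rw [finsum_mem_coe_finset]
  -- union of level path images is everything
  have hUnion : (⋃ N, F.S '' levelPaths G V N) = Set.range F.S := by
    apply Set.Subset.antisymm
    · exact Set.iUnion_subset fun N => Set.image_subset_range _ _
    · rintro _ ⟨p, rfl⟩
      obtain ⟨a, ha⟩ := hGBD.cover (G.r p) (G.d_r p)
      obtain ⟨b, hb⟩ := hGBD.cover (G.s p) (G.d_s p)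
      exact Set.mem_iUnion.mpr ⟨max a b, ⟨p,
        ⟨⟨a, le_max_left a b, ha⟩, ⟨b, le_max_right a b, hb⟩⟩, rfl⟩⟩
  -- part 1
  have hmonoSS : Monotone fun N => (F.S '' levelPaths G V N : Set A) := by
    intro M N hMN
    apply Set.image_mono
    rintro p ⟨⟨a, haM, ha⟩, ⟨b, hbM, hb⟩⟩
    exact ⟨⟨a, haM.trans hMN, ha⟩, ⟨b, hbM.trans hMN, hb⟩⟩
  have hdir : Directed (· ≤ ·)
      fun N => NonUnitalStarAlgebra.adjoin ℂ (F.S '' levelPaths G V N) :=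
    Monotone.directed_le fun M N h => NonUnitalStarAlgebra.adjoin_le
      ((hmonoSS h).trans (NonUnitalStarAlgebra.subset_adjoin ℂ _))
  have hsup : NonUnitalStarAlgebra.adjoin ℂ (Set.range F.S)
      = ⨆ N, NonUnitalStarAlgebra.adjoin ℂ (F.S '' levelPaths G V N) := by
    apply le_antisymm
    · apply NonUnitalStarAlgebra.adjoin_le
      intro x hx
      rw [← hUnion] at hx
      obtain ⟨N, hxs⟩ := Set.mem_iUnion.mp hx
      exact (le_iSup (fun N => NonUnitalStarAlgebra.adjoin ℂ (F.S '' levelPaths G V N)) N)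
        (NonUnitalStarAlgebra.subset_adjoin ℂ _ hxs)
    · exact iSup_le fun N => NonUnitalStarAlgebra.adjoin_le
        ((Set.image_subset_range _ _).trans (NonUnitalStarAlgebra.subset_adjoin ℂ _))
  have hpart1 : generatedCStar (Set.range F.S)
      = closure (⋃ N, generatedCStar (F.S '' levelPaths G V N)) := by
    calc generatedCStar (Set.range F.S)
        = closure ((⨆ N, NonUnitalStarAlgebra.adjoin ℂ (F.S '' levelPaths G V N) : _) : Set A) := by
          rw [generatedCStar, hsup]
      _ = closure (⋃ N, (NonUnitalStarAlgebra.adjoin ℂ (F.S '' levelPaths G V N) : Set A)) := by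
          rw [NonUnitalStarSubalgebra.coe_iSup_of_directed hdir]
      _ = closure (⋃ N, generatedCStar (F.S '' levelPaths G V N)) := by
          apply Set.Subset.antisymm
          · exact closure_mono (Set.iUnion_mono fun N => subset_closure)
          · refine closure_minimal (Set.iUnion_subset fun N => ?_) isClosed_closure
            exact closure_mono (Set.subset_iUnion
              (fun N => (NonUnitalStarAlgebra.adjoin ℂ (F.S '' levelPaths G V N) : Set A)) N)
  -- part 2
  have hfull1 : FullIn (generatedCStar (Set.range F.S)) P := by
    apply hGBD.fullIn_generated F
    rintro _ ⟨ρ, rfl⟩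
    obtain ⟨n, hn⟩ := hGBD.cover (G.s ρ) (G.d_s ρ)
    obtain ⟨lam, h0, hs⟩ := hGBD.path_to_zero n _ hn
    exact ⟨ρ, lam, rfl, h0, hs, ⟨lam, rfl⟩⟩
  have hfullN : ∀ N : ℕ, FullIn (generatedCStar (F.S '' levelPaths G V N)) P := by
    intro N
    apply hGBD.fullIn_generated F
    rintro _ ⟨ρ, ⟨⟨a, haN, hra⟩, ⟨b, hbN, hsb⟩⟩, rfl⟩
    obtain ⟨lam, h0, hs⟩ := hGBD.path_to_zero b _ hsb
    exact ⟨ρ, lam, rfl, h0, hs,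
      ⟨lam, ⟨⟨0, Nat.zero_le N, h0⟩, ⟨b, hbN, by rwa [hs]⟩⟩, rfl⟩⟩
  -- part 3
  have hPB : P ∈ generatedCStar (Set.range F.S) := by
    rw [generatedCStar_eq_genSub, hPfin]
    exact sum_mem fun v hv =>
      subset_closure (NonUnitalStarAlgebra.subset_adjoin ℂ _ ⟨v, rfl⟩)
  have hφcont : Continuous fun x : A => P * x * P := by fun_prop
  have hCsubB : ∀ N, generatedCStar (F.S '' levelPaths G V N)
      ⊆ generatedCStar (Set.range F.S) :=
    fun N => generatedCStar_mono (Set.image_subset_range _ _)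
  have hφB_eq : (fun x => P * x * P) '' generatedCStar (Set.range F.S)
      = generatedCStar (Set.range F.S) ∩ {x | P * x * P = x} := by
    ext x
    constructor
    · rintro ⟨b, hb, rfl⟩
      refine ⟨mul_mem_generatedCStar (mul_mem_generatedCStar hPB hb) hPB, ?_⟩
      show P * (P * b * P) * P = P * b * P
      simp only [← mul_assoc]
      rw [hPP, mul_assoc (P * b), hPP]
    · rintro ⟨hxB, hfix⟩
      exact ⟨x, hxB, hfix⟩
  have hφB_closed : IsClosed ((fun x => P * x * P) '' generatedCStar (Set.range F.S)) := by
    rw [hφB_eq]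
    exact (isClosed_generatedCStar _).inter (isClosed_eq hφcont continuous_id)
  have hpart4 : (fun x => P * x * P) '' generatedCStar (Set.range F.S)
      = closure (⋃ N, (fun x => P * x * P) '' generatedCStar (F.S '' levelPaths G V N)) := by
    apply Set.Subset.antisymm
    · rintro _ ⟨b, hb, rfl⟩
      rw [hpart1] at hb
      have h1 : (fun x => P * x * P) b ∈
          closure ((fun x => P * x * P) '' ⋃ N, generatedCStar (F.S '' levelPaths G V N)) :=
        image_closure_subset_closure_image hφcont ⟨b, hb, rfl⟩
      rwa [Set.image_iUnion] at h1
    · exact closure_minimal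
        (Set.iUnion_subset fun N => Set.image_mono (hCsubB N)) hφB_closed
  exact ⟨hpart1, hfull1, hfullN, hpart4⟩
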